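/- Suppose g, p : ℝᵐ → ℝ and h : ℝᵐ → ℝⁿ with p(x) > 0 for all x ≠ 0. If for all x ≠ 0 the block matrix [[g(x)·p(x), p(x)·h(x)ᵀ],[p(x)·h(x), g(x)·I]] is negative definite, then g(x) < −‖h(x)‖·√(p(x)) for all x ≠ 0. -/
import Mathlib


open Matrix

theorem block_negdef_implies_bound (m n : ℕ)
    (g p : (Fin m → ℝ) → ℝ) (h : (Fin m → ℝ) → (Fin n → ℝ))
    (hp : ∀ x : Fin m → ℝ, x ≠ 0 → 0 < p x)
    (hneg : ∀ x : Fin m → ℝ, x ≠ 0 →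
      ∀ z : (Fin 1 ⊕ Fin n) → ℝ, z ≠ 0 →
        z ⬝ᵥ (Matrix.of fun i j =>
          match i, j with
          | Sum.inl _, Sum.inl _ => g x * p x
          | Sum.inl _, Sum.inr k => p x * h x k
          | Sum.inr k, Sum.inl _ => p x * h x k
          | Sum.inr k, Sum.inr l => if k = l then g x else 0).mulVec z < 0) :
    ∀ x : Fin m → ℝ, x ≠ 0 →
      g x < -(Real.sqrt (∑ i, h x i ^ 2) * Real.sqrt (p x)) := by
  intro x hx
  have hpx := hp x hx
  set H := ∑ i, h x i ^ 2 with hH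
  have hHnn : 0 ≤ H := Finset.sum_nonneg fun i _ => sq_nonneg _
  set s := Real.sqrt H with hs
  set q := Real.sqrt (p x) with hq
  have hs2 : s ^ 2 = H := Real.sq_sqrt hHnn
  have hq2 : q ^ 2 = p x := Real.sq_sqrt hpx.le
  have hqpos : 0 < q := Real.sqrt_pos.mpr hpx
  rcases eq_or_lt_of_le hHnn with hH0 | hHpos
  · -- H = 0
    have hz : (Sum.elim (fun _ => (1:ℝ)) 0 : Fin 1 ⊕ Fin n → ℝ) ≠ 0 := by
      intro h0
      have := congrFun h0 (Sum.inl 0)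
      simp at this
    have key := hneg x hx _ hz
    simp [Matrix.mulVec, dotProduct, Fintype.sum_sum_type] at key
    have hg : g x < 0 := by nlinarith
    have hs0 : s = 0 := by rw [hs, ← hH0, Real.sqrt_zero]
    rw [hs0]
    simpa using hg
  · have hspos : 0 < s := Real.sqrt_pos.mpr hHpos
    have hz : (Sum.elim (fun _ => s) (fun k => q * h x k) : Fin 1 ⊕ Fin n → ℝ) ≠ 0 := by
      intro h0
      have := congrFun h0 (Sum.inl 0)
      simp at this
      exact hspos.ne' this
    have key := hneg x hx _ hz
    simp [Matrix.mulVec, dotProduct, Fintype.sum_sum_type, Finset.mul_sum,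
      Finset.sum_ite_eq, mul_ite] at key
    have e1 : (∑ k, p x * h x k * (q * h x k)) = p x * q * H := by
      rw [hH, Finset.mul_sum]
      exact Finset.sum_congr rfl fun k _ => by ring
    have e2 : (∑ k, q * h x k * (p x * h x k * s + g x * (q * h x k)))
        = (p x * s + g x * q) * q * H := by
      rw [hH, Finset.mul_sum]
      exact Finset.sum_congr rfl fun k _ => by ring
    have e3 : s * (g x * p x * s + p x * q * H) + (p x * s + g x * q) * q * H
        = 2 * (p x * H) * (g x + q * s) := by
      linear_combination (g x * p x) * hs2 + (g x * H) * hq2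
    rw [e1, e2, e3] at key
    nlinarith [mul_pos hpx hHpos, key]
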